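/- Let d ≥ 2, let T be a finite d-ary rooted tree of height n ≥ 0, and let G be an abelian subgroup of Aut(T). Let q be the order of the largest abelian subgroup of the symmetric group S_d, and let I(T/G) be the number of incomplete vertices of the quotient tree T/G. Then |G| ≤ q^{I(T/G)}. -/

import Mathlib

noncomputable section

/-- An infinite `d`-ary rooted tree, presented by its levels: `V n` is the set of
level-`n` vertices, `parent` maps a vertex to its parent, there is a unique root,
and every vertex has at least `1` and at most `d` children. -/
structure DaryTree (d : ℕ) where
  V : ℕ → Type
  parent : ∀ n, V (n + 1) → V n
  root_card : Nat.card (V 0) = 1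
  child_lb : ∀ n (v : V n), 1 ≤ Nat.card {w : V (n + 1) // parent n w = v}
  child_ub : ∀ n (v : V n), Nat.card {w : V (n + 1) // parent n w = v} ≤ d

/-- The group of automorphisms of a rooted tree presented by levels and parent maps:
families of level permutations fixing the root level structure and commuting with
the parent maps. -/
def autGroup {V : ℕ → Type*} (parent : ∀ n, V (n + 1) → V n) :
    Subgroup (∀ n, Equiv.Perm (V n)) where
  carrier := {σ | ∀ n (v : V (n + 1)), parent n (σ (n + 1) v) = σ n (parent n v)}
  one_mem' := by intro n v; rfl
  mul_mem' := by
    intro a b ha hb n v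
    simp only [Pi.mul_apply, Equiv.Perm.mul_apply]
    rw [ha, hb]
  inv_mem' := by
    intro a ha n v
    simp only [Pi.inv_apply]
    have h := ha n ((a (n + 1))⁻¹ v)
    rw [show (a (n + 1)) ((a (n + 1))⁻¹ v) = v from (a (n + 1)).apply_symm_apply v] at h
    rw [h, show (a n)⁻¹ ((a n) (parent n ((a (n + 1))⁻¹ v))) = parent n ((a (n + 1))⁻¹ v) from
      (a n).symm_apply_apply _]

/-- The automorphism group `Aut(T)` of an infinite `d`-ary rooted tree. -/
def DaryTree.aut {d : ℕ} (T : DaryTree d) : Subgroup (∀ n, Equiv.Perm (T.V n)) :=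
  autGroup T.parent

/-- A `d`-ary rooted tree is complete if every vertex has exactly `d` children. -/
def DaryTree.IsComplete {d : ℕ} (T : DaryTree d) : Prop :=
  ∀ n (v : T.V n), Nat.card {w : T.V (n + 1) // T.parent n w = v} = d

end
noncomputable section

/-- A finite `d`-ary rooted tree of height `n`, presented by its levels: there is a
unique root, each vertex of level `k < n` has at least `1` and at most `d` children,
and there are no vertices above level `n`. -/
structure FinDaryTree (d n : ℕ) where
  V : ℕ → Type
  parent : ∀ k, V (k + 1) → V k
  root_card : Nat.card (V 0) = 1
  child_lb : ∀ k, k < n → ∀ v : V k, 1 ≤ Nat.card {w : V (k + 1) // parent k w = v}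
  child_ub : ∀ k, k < n → ∀ v : V k, Nat.card {w : V (k + 1) // parent k w = v} ≤ d
  level_empty : ∀ k, n < k → IsEmpty (V k)

/-- The orbit equivalence relation of a group `G` of families of level permutations on
the level-`k` vertices. -/
def orbitSetoid {V : ℕ → Type*} (G : Subgroup (∀ k, Equiv.Perm (V k))) (k : ℕ) :
    Setoid (V k) where
  r v w := ∃ σ ∈ G, σ k v = w
  iseqv := by
    constructor
    · intro v
      exact ⟨1, G.one_mem, rfl⟩
    · rintro v w ⟨σ, hσ, hvw⟩
      refine ⟨σ⁻¹, G.inv_mem hσ, ?_⟩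
      rw [← hvw]
      simp
    · rintro u v w ⟨σ, hσ, h1⟩ ⟨τ, hτ, h2⟩
      refine ⟨τ * σ, G.mul_mem hτ hσ, ?_⟩
      simp [h1, h2]

/-- The parent map of the quotient tree `T/G`, sending the `G`-orbit of a level-`(k+1)`
vertex to the `G`-orbit of its parent.  The hypothesis `hG` says that elements of `G`
are tree automorphisms. -/
def orbitParent {V : ℕ → Type*} (parent : ∀ k, V (k + 1) → V k)
    (G : Subgroup (∀ k, Equiv.Perm (V k)))
    (hG : ∀ σ ∈ G, ∀ k (v : V (k + 1)), parent k (σ (k + 1) v) = σ k (parent k v))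
    (k : ℕ) : Quotient (orbitSetoid G (k + 1)) → Quotient (orbitSetoid G k) :=
  Quotient.map (parent k) (by
    rintro v w ⟨σ, hσ, hvw⟩
    refine ⟨σ, hσ, ?_⟩
    rw [← hG σ hσ k v, hvw])

/-- `I(T/G)`: the number of incomplete vertices of the quotient tree `T/G`, i.e. the
number of `G`-orbits of vertices of level `k < n` having fewer than `d` children in the
quotient tree. -/
def incompleteCount {V : ℕ → Type*} (d n : ℕ) (parent : ∀ k, V (k + 1) → V k)
    (G : Subgroup (∀ k, Equiv.Perm (V k)))
    (hG : ∀ σ ∈ G, ∀ k (v : V (k + 1)), parent k (σ (k + 1) v) = σ k (parent k v)) : ℕ :=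
  ∑ k ∈ Finset.range n,
    Nat.card {O : Quotient (orbitSetoid G k) //
      Nat.card {P : Quotient (orbitSetoid G (k + 1)) // orbitParent parent G hG k P = O} < d}

/-- `q`: the order of the largest abelian subgroup of the symmetric group `S_d`. -/
def abelianMax (d : ℕ) : ℕ :=
  sSup {m : ℕ | ∃ H : Subgroup (Equiv.Perm (Fin d)),
    (∀ a ∈ H, ∀ b ∈ H, a * b = b * a) ∧ Nat.card H = m}

end
section Aux
variable {d n : ℕ}

lemma finV (T : FinDaryTree d n) : ∀ k, Finite (T.V k) := by
  intro k
  induction k with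
  | zero => exact Nat.finite_of_card_ne_zero (by rw [T.root_card]; exact one_ne_zero)
  | succ k ih =>
    by_cases hk : k < n
    · haveI := ih
      haveI : ∀ v : T.V k, Finite {w : T.V (k+1) // T.parent k w = v} := fun v =>
        Nat.finite_of_card_ne_zero (by have := T.child_lb k hk v; omega)
      exact Finite.of_equiv _ (Equiv.sigmaFiberEquiv (T.parent k))
    · haveI : IsEmpty (T.V (k+1)) := T.level_empty (k+1) (by omega)
      infer_instance

lemma finPi (T : FinDaryTree d n) : Finite (∀ k, Equiv.Perm (T.V k)) := by
  haveI := finV T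
  have hinj : Function.Injective
      (fun (f : ∀ k, Equiv.Perm (T.V k)) (i : Fin (n+1)) => f i.1) := by
    intro f g h
    funext j
    by_cases hj : j ≤ n
    · exact congrFun h ⟨j, by omega⟩
    · haveI : IsEmpty (T.V j) := T.level_empty j (by omega)
      exact Equiv.ext fun v => (IsEmpty.false v).elim
  exact Finite.of_injective _ hinj

lemma abelianMax_bddAbove (d : ℕ) : BddAbove {m : ℕ | ∃ H : Subgroup (Equiv.Perm (Fin d)),
    (∀ a ∈ H, ∀ b ∈ H, a * b = b * a) ∧ Nat.card H = m} := by
  refine ⟨Nat.card (Equiv.Perm (Fin d)), ?_⟩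
  rintro m ⟨H, -, rfl⟩
  exact Subgroup.card_le_card_group H

lemma one_le_abelianMax (d : ℕ) : 1 ≤ abelianMax d := by
  apply le_csSup (abelianMax_bddAbove d)
  exact ⟨⊥, fun a ha b hb => by simp_all [Subgroup.mem_bot], Subgroup.card_bot⟩

lemma abelianMax_spec {α : Type} [Finite α] (h : Nat.card α ≤ d)
    (H : Subgroup (Equiv.Perm α)) (hH : ∀ a ∈ H, ∀ b ∈ H, a * b = b * a) :
    Nat.card H ≤ abelianMax d := by
  let e : α ↪ Fin d := (Finite.equivFin α).toEmbedding.trans (Fin.castLEEmb h)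
  let φ := Equiv.Perm.viaEmbeddingHom e
  have hφ : Function.Injective φ := Equiv.Perm.viaEmbeddingHom_injective e
  have hcard : Nat.card (H.map φ) = Nat.card H := by
    have : (H.map φ : Set (Equiv.Perm (Fin d))) = φ '' (H : Set (Equiv.Perm α)) := rfl
    rw [show ((H.map φ : Subgroup (Equiv.Perm (Fin d))) : Type) = ↥(φ '' (H : Set (Equiv.Perm α))) from congrArg _ this]
    exact Nat.card_image_of_injective hφ _
  apply le_csSup (abelianMax_bddAbove d)
  refine ⟨H.map φ, ?_, hcard⟩
  rintro a ⟨x, hx, rfl⟩ b ⟨y, hy, rfl⟩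
  rw [← map_mul, ← map_mul, hH x hx y hy]
end Aux

noncomputable section Aux2
variable {d n : ℕ}

/-- Elements of `G` that fix all vertices of level `≤ k` pointwise. -/
def levelFixing (T : FinDaryTree d n) (G : Subgroup (∀ k, Equiv.Perm (T.V k))) (k : ℕ) :
    Subgroup (∀ j, Equiv.Perm (T.V j)) where
  carrier := {σ | σ ∈ G ∧ ∀ j, j ≤ k → ∀ v : T.V j, σ j v = v}
  one_mem' := ⟨G.one_mem, fun _ _ _ => rfl⟩
  mul_mem' := by
    rintro a b ⟨haG, ha⟩ ⟨hbG, hb⟩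
    refine ⟨G.mul_mem haG hbG, fun j hj v => ?_⟩
    simp only [Pi.mul_apply, Equiv.Perm.mul_apply, hb j hj v, ha j hj v]
  inv_mem' := by
    rintro a ⟨haG, ha⟩
    refine ⟨G.inv_mem haG, fun j hj v => ?_⟩
    have h := ha j hj ((a j)⁻¹ v)
    rw [show (a j) ((a j)⁻¹ v) = v from (a j).apply_symm_apply v] at h
    simp only [Pi.inv_apply]
    exact h.symm

lemma levelFixing_le {T : FinDaryTree d n} {G : Subgroup (∀ k, Equiv.Perm (T.V k))} {k : ℕ} :
    levelFixing T G (k+1) ≤ levelFixing T G k := by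
  rintro σ ⟨hσG, hσ⟩
  exact ⟨hσG, fun j hj v => hσ j (hj.trans (Nat.le_succ k)) v⟩

lemma parent_fix {T : FinDaryTree d n} {G : Subgroup (∀ k, Equiv.Perm (T.V k))}
    (hGsub : G ≤ autGroup T.parent) {k : ℕ} {σ : ∀ j, Equiv.Perm (T.V j)}
    (hσ : σ ∈ levelFixing T G k) (w : T.V (k+1)) :
    T.parent k (σ (k+1) w) = T.parent k w := by
  rw [hGsub hσ.1 k w, hσ.2 k le_rfl]

/-- The permutation induced by `σ ∈ levelFixing T G k` on the fiber over `v`. -/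
def fibPermHom (T : FinDaryTree d n) (G : Subgroup (∀ k, Equiv.Perm (T.V k)))
    (hGsub : G ≤ autGroup T.parent) (k : ℕ) (v : T.V k) :
    ↥(levelFixing T G k) →* Equiv.Perm {w : T.V (k+1) // T.parent k w = v} where
  toFun σ := Equiv.Perm.subtypePerm (σ.1 (k+1))
    (fun w => by rw [parent_fix hGsub σ.2 w])
  map_one' := Equiv.ext fun w => Subtype.ext rfl
  map_mul' σ τ := Equiv.ext fun w => Subtype.ext rfl

lemma fibPermHom_apply {T : FinDaryTree d n} {G : Subgroup (∀ k, Equiv.Perm (T.V k))}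
    (hGsub : G ≤ autGroup T.parent) {k : ℕ} (v : T.V k) (σ : ↥(levelFixing T G k))
    (w : {w : T.V (k+1) // T.parent k w = v}) :
    (fibPermHom T G hGsub k v σ w : T.V (k+1)) = σ.1 (k+1) w.1 := rfl

/-- If `σ` fixes the fibers over orbit representatives pointwise, it fixes all of
level `k+1` pointwise. -/
lemma fix_all {T : FinDaryTree d n} {G : Subgroup (∀ k, Equiv.Perm (T.V k))}
    (hGsub : G ≤ autGroup T.parent)
    (hab : ∀ a ∈ G, ∀ b ∈ G, a * b = b * a) {k : ℕ} {σ : ∀ j, Equiv.Perm (T.V j)}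
    (hσ : σ ∈ levelFixing T G k)
    (h : ∀ O : Quotient (orbitSetoid G k), ∀ w : T.V (k+1),
      T.parent k w = O.out → σ (k+1) w = w)
    (w : T.V (k+1)) : σ (k+1) w = w := by
  set v := T.parent k w with hv
  obtain ⟨g, hgG, hg⟩ := Quotient.mk_out (s := orbitSetoid G k) v
  -- `g k (⟦v⟧.out) = v`
  set u := (g (k+1))⁻¹ w with hu
  have hpu : T.parent k u = (Quotient.mk (orbitSetoid G k) v).out := by
    have h1 : T.parent k ((g⁻¹) (k+1) w) = (g⁻¹) k (T.parent k w) := hGsub (G.inv_mem hgG) k w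
    simp only [Pi.inv_apply] at h1
    rw [hu, h1, ← hv, Equiv.Perm.inv_eq_iff_eq]
    exact hg.symm
  have hfix : σ (k+1) u = u := h _ u hpu
  have hcomm : σ * g = g * σ := hab σ hσ.1 g hgG
  have hgu : g (k+1) u = w := by rw [hu, show (g (k+1)) ((g (k+1))⁻¹ w) = w from (g (k+1)).apply_symm_apply w]
  calc σ (k+1) w = σ (k+1) (g (k+1) u) := by rw [hgu]
    _ = (σ * g) (k+1) u := rfl
    _ = (g * σ) (k+1) u := by rw [hcomm]
    _ = g (k+1) (σ (k+1) u) := rfl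
    _ = g (k+1) u := by rw [hfix]
    _ = w := hgu

/-- If the orbit `O` at level `k` is complete in the quotient (has `d` children),
then every `σ ∈ levelFixing T G k` fixes the fiber over `O.out` pointwise. -/
lemma complete_fix {T : FinDaryTree d n} {G : Subgroup (∀ k, Equiv.Perm (T.V k))}
    (hGsub : G ≤ autGroup T.parent) {k : ℕ} (hk : k < n)
    (O : Quotient (orbitSetoid G k))
    (hO : ¬ Nat.card {P : Quotient (orbitSetoid G (k+1)) //
        orbitParent T.parent G (fun σ hσ => hGsub hσ) k P = O} < d)
    {σ : ∀ j, Equiv.Perm (T.V j)} (hσ : σ ∈ levelFixing T G k)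
    (w : T.V (k+1)) (hw : T.parent k w = O.out) : σ (k+1) w = w := by
  haveI := finV T
  set hG : ∀ σ ∈ G, ∀ k (v : T.V (k + 1)), T.parent k (σ (k + 1) v) = σ k (T.parent k v) :=
    fun σ hσ => hGsub hσ with hGdef
  set Fib := {w : T.V (k+1) // T.parent k w = O.out} with hFib
  set QF := {P : Quotient (orbitSetoid G (k+1)) // orbitParent T.parent G hG k P = O} with hQF
  -- the natural surjection from the fiber over the representative to the quotient fiber
  have hmk : ∀ x : Fib, orbitParent T.parent G hG k (Quotient.mk _ x.1) = O := by
    intro x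
    show Quotient.map _ _ _ = O
    rw [Quotient.map_mk, x.2, Quotient.out_eq]
  set s : Fib → QF := fun x => ⟨Quotient.mk _ x.1, hmk x⟩ with hs
  have hsurj : Function.Surjective s := by
    rintro ⟨P, hP⟩
    obtain ⟨w', rfl⟩ := Quotient.exists_rep P
    have hP' : Quotient.mk (orbitSetoid G k) (T.parent k w') = O := by
      rw [show Quotient.mk (orbitSetoid G k) (T.parent k w')
          = orbitParent T.parent G hG k (Quotient.mk _ w') from (Quotient.map_mk _ _ _).symm, hP]
    obtain ⟨g, hgG, hg⟩ := Quotient.exact (hP'.trans O.out_eq.symm)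
    refine ⟨⟨g (k+1) w', ?_⟩, ?_⟩
    · rw [hGsub hgG k w', hg]
    · apply Subtype.ext
      show Quotient.mk _ (g (k+1) w') = Quotient.mk _ w'
      refine (Quotient.sound ?_).symm
      exact ⟨g, hgG, rfl⟩
  have hcard1 : Nat.card QF ≤ Nat.card Fib := Nat.card_le_card_of_surjective s hsurj
  have hcard2 : Nat.card Fib ≤ d := T.child_ub k hk O.out
  have hd : Nat.card QF = d := by omega
  have hbij : Function.Bijective s :=
    (Nat.bijective_iff_surjective_and_card s).2 ⟨hsurj, by omega⟩
  have hmem : T.parent k (σ (k+1) w) = O.out := by rw [parent_fix hGsub hσ w, hw]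
  have : s ⟨σ (k+1) w, hmem⟩ = s ⟨w, hw⟩ := by
    apply Subtype.ext
    refine Quotient.sound ?_
    exact ⟨σ⁻¹, G.inv_mem hσ.1, by simp⟩
  have := hbij.1 this
  exact congrArg Subtype.val this

end Aux2
section Step
variable {d n : ℕ}

lemma step_bound (T : FinDaryTree d n)
    (G : Subgroup (∀ k, Equiv.Perm (T.V k))) (hGsub : G ≤ autGroup T.parent)
    (hab : ∀ a ∈ G, ∀ b ∈ G, a * b = b * a) (k : ℕ) (hk : k < n) :
    Nat.card (levelFixing T G k) ≤
      abelianMax d ^ (Nat.card {O : Quotient (orbitSetoid G k) //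
        Nat.card {P : Quotient (orbitSetoid G (k+1)) //
          orbitParent T.parent G (fun σ hσ => hGsub hσ) k P = O} < d})
      * Nat.card (levelFixing T G (k+1)) := by
  haveI := finV T
  haveI := finPi T
  set Inc := {O : Quotient (orbitSetoid G k) //
    Nat.card {P : Quotient (orbitSetoid G (k+1)) //
      orbitParent T.parent G (fun σ hσ => hGsub hσ) k P = O} < d} with hInc
  haveI : Finite (Quotient (orbitSetoid G k)) := Quotient.finite _
  haveI : Finite Inc := Subtype.finite
  haveI : Fintype Inc := Fintype.ofFinite _
  set Θ : ↥(levelFixing T G k) →*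
      ∀ O : Inc, Equiv.Perm {w : T.V (k+1) // T.parent k w = O.1.out} :=
    Pi.monoidHom (fun O => fibPermHom T G hGsub k O.1.out) with hΘ
  have hker : Θ.ker = (levelFixing T G (k+1)).subgroupOf (levelFixing T G k) := by
    ext σ
    rw [MonoidHom.mem_ker, Subgroup.mem_subgroupOf]
    constructor
    · intro h
      have hrep : ∀ O : Quotient (orbitSetoid G k), ∀ w : T.V (k+1),
          T.parent k w = O.out → σ.1 (k+1) w = w := by
        intro O w hw
        by_cases hO : Nat.card {P : Quotient (orbitSetoid G (k+1)) //
            orbitParent T.parent G (fun σ hσ => hGsub hσ) k P = O} < d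
        · have h1 : fibPermHom T G hGsub k ((⟨O, hO⟩ : Inc)).1.out σ = 1 := congrFun h ⟨O, hO⟩
          have h2 : (fibPermHom T G hGsub k O.out σ) ⟨w, hw⟩ = ⟨w, hw⟩ := by
            rw [h1]; rfl
          exact congrArg Subtype.val h2
        · exact complete_fix hGsub hk O hO σ.2 w hw
      have hall := fix_all hGsub hab σ.2 hrep
      refine ⟨σ.2.1, fun j hj v => ?_⟩
      rcases Nat.lt_succ_iff_lt_or_eq.mp (Nat.lt_succ_of_le hj) with h' | rfl
      · exact σ.2.2 j (Nat.lt_succ_iff.mp h') v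
      · exact hall v
    · intro h
      funext O
      apply Equiv.ext
      rintro ⟨w, hw⟩
      apply Subtype.ext
      exact h.2 (k+1) le_rfl w
  have hcount : Nat.card Θ.range ≤ abelianMax d ^ Nat.card Inc := by
    set F : Θ.range → ∀ O : Inc, ↥((fibPermHom T G hGsub k O.1.out).range) :=
      fun f O => ⟨f.1 O, by obtain ⟨σ, hσ⟩ := f.2; exact ⟨σ, by rw [← hσ]; rfl⟩⟩ with hF
    have hFinj : Function.Injective F := by
      intro f g h
      apply Subtype.ext
      funext O
      exact congrArg Subtype.val (congrFun h O)
    calc Nat.card Θ.range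
        ≤ Nat.card (∀ O : Inc, ↥((fibPermHom T G hGsub k O.1.out).range)) :=
          Nat.card_le_card_of_injective F hFinj
      _ = ∏ O : Inc, Nat.card ↥((fibPermHom T G hGsub k O.1.out).range) := Nat.card_pi
      _ ≤ ∏ _O : Inc, abelianMax d := by
          apply Finset.prod_le_prod'
          intro O _
          apply abelianMax_spec (T.child_ub k hk O.1.out)
          rintro a ⟨x, rfl⟩ b ⟨y, rfl⟩
          rw [← map_mul, ← map_mul]
          congr 1
          exact Subtype.ext (hab x.1 x.2.1 y.1 y.2.1)
      _ = abelianMax d ^ Nat.card Inc := by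
          rw [Finset.prod_const, Finset.card_univ, Nat.card_eq_fintype_card]
  have h1 : Nat.card (levelFixing T G k) = Nat.card Θ.range * Nat.card Θ.ker := by
    rw [Subgroup.card_eq_card_quotient_mul_card_subgroup Θ.ker,
      Nat.card_congr (QuotientGroup.quotientKerEquivRange Θ).toEquiv]
  have h2 : Nat.card Θ.ker = Nat.card (levelFixing T G (k+1)) := by
    rw [hker]
    exact Nat.card_congr (Subgroup.subgroupOfEquivOfLe levelFixing_le).toEquiv
  rw [h1, h2]
  exact Nat.mul_le_mul hcount le_rfl

end Step

/-- **Order bound for abelian groups of automorphisms of finite `d`-ary rooted trees**: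
if `G ≤ Aut(T)` is abelian, `q` is the order of the largest abelian subgroup of `S_d`,
and `I(T/G)` is the number of incomplete vertices of the quotient tree `T/G`, then
`|G| ≤ q^{I(T/G)}`. -/
theorem arboreal_abelian_card_bound {d n : ℕ} (hd : 2 ≤ d) (T : FinDaryTree d n)
    (G : Subgroup (∀ k, Equiv.Perm (T.V k))) (hGsub : G ≤ autGroup T.parent)
    (hab : ∀ a ∈ G, ∀ b ∈ G, a * b = b * a) :
    Nat.card G ≤ abelianMax d ^ incompleteCount d n T.parent G (fun σ hσ => hGsub hσ) := by
  classical
  haveI := finV T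
  haveI := finPi T
  have hBn : Nat.card (levelFixing T G n) = 1 := by
    have hbot : levelFixing T G n = ⊥ := by
      apply le_antisymm _ bot_le
      rintro σ ⟨hσG, hσ⟩
      rw [Subgroup.mem_bot]
      funext j
      apply Equiv.ext
      intro v
      by_cases hj : j ≤ n
      · exact hσ j hj v
      · exact ((T.level_empty j (by omega)).false v).elim
    rw [hbot, Subgroup.card_bot]
  set m : ℕ → ℕ := fun k => Nat.card {O : Quotient (orbitSetoid G k) //
    Nat.card {P : Quotient (orbitSetoid G (k+1)) //
      orbitParent T.parent G (fun σ hσ => hGsub hσ) k P = O} < d} with hm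
  have key : ∀ j, j ≤ n → Nat.card (levelFixing T G (n - j)) ≤
      abelianMax d ^ (∑ k ∈ Finset.Ico (n - j) n, m k) := by
    intro j
    induction j with
    | zero =>
      intro _
      simp only [Nat.sub_zero, Finset.Ico_self, Finset.sum_empty, pow_zero]
      exact le_of_eq hBn
    | succ j ih =>
      intro hj
      have hkn : n - (j+1) < n := by omega
      have hsucc : n - (j+1) + 1 = n - j := by omega
      have hstep := step_bound T G hGsub hab (n - (j+1)) hkn
      calc Nat.card (levelFixing T G (n - (j+1)))
          ≤ abelianMax d ^ m (n - (j+1)) * Nat.card (levelFixing T G (n - (j+1) + 1)) := hstep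
        _ = abelianMax d ^ m (n - (j+1)) * Nat.card (levelFixing T G (n - j)) := by
            rw [hsucc]
        _ ≤ abelianMax d ^ m (n - (j+1)) *
            abelianMax d ^ (∑ k ∈ Finset.Ico (n - j) n, m k) :=
            Nat.mul_le_mul le_rfl (ih (by omega))
        _ = abelianMax d ^ (∑ k ∈ Finset.Ico (n - (j+1)) n, m k) := by
            rw [← pow_add, Finset.sum_eq_sum_Ico_succ_bot hkn, hsucc]
  have hG0 : levelFixing T G 0 = G := by
    haveI : Subsingleton (T.V 0) := (Nat.card_eq_one_iff_unique.mp T.root_card).1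
    ext σ
    constructor
    · exact fun h => h.1
    · intro h
      refine ⟨h, fun j hj v => ?_⟩
      have hj0 : j = 0 := Nat.le_zero.mp hj
      subst hj0
      exact Subsingleton.elim _ _
  have hfin := key n le_rfl
  rw [Nat.sub_self, hG0] at hfin
  have hic : incompleteCount d n T.parent G (fun σ hσ => hGsub hσ)
      = ∑ k ∈ Finset.Ico 0 n, m k := by
    rw [← Finset.range_eq_Ico, hm]
    rfl
  rw [hic]
  exact hfin
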